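/- Every handle sequence from a knot to a knot admits a twist function f with f(Λ₊) = ½; moreover, if the handle sequence satisfies Property A, then it admits a regular twist function f with f(Λ₊) = ½. -/

import Mathlib

/-! Combinatorial handle sequences underlying decomposable Lagrangian cobordisms, and
twist functions on them. -/

/-- An isotopy move from level `A` to level `B`: a bijection of components. -/
structure IsotopyMove (A B : Type) where
  e : A ≃ B

/-- A 0-handle move: a distinguished born component of `B`, together with a bijection
from `A` onto the complement of the born component. -/
structure ZeroHandleMove (A B : Type) where
  born : B
  e : A ≃ {x : B // x ≠ born}

/-- A ∧-handle move: two distinct base components of `A` are joined into a single result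
component of `B`, together with a bijection between the remaining components. -/
structure WedgeMove (A B : Type) where
  base1 : A
  base2 : A
  base_ne : base1 ≠ base2
  result : B
  e : {a : A // a ≠ base1 ∧ a ≠ base2} ≃ {x : B // x ≠ result}

/-- A ∨-handle move: a base component of `A` is split into two distinct result components
of `B`, together with a bijection between the remaining components. -/
structure VeeMove (A B : Type) where
  base : A
  result1 : B
  result2 : B
  result_ne : result1 ≠ result2
  e : {a : A // a ≠ base} ≃ {x : B // x ≠ result1 ∧ x ≠ result2}

/-- An elementary move between two consecutive levels of a handle sequence. -/
inductive Move (A B : Type) where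
  | isotopy : IsotopyMove A B → Move A B
  | zero : ZeroHandleMove A B → Move A B
  | wedge : WedgeMove A B → Move A B
  | vee : VeeMove A B → Move A B

/-- The relation `R ⊆ A × B` determined by an elementary move. -/
def Move.rel {A B : Type} : Move A B → A → B → Prop
  | .isotopy m, a, b => m.e a = b
  | .zero m, a, b => (m.e a : B) = b
  | .wedge m, a, b => ((a = m.base1 ∨ a = m.base2) ∧ b = m.result) ∨
      ∃ h : a ≠ m.base1 ∧ a ≠ m.base2, (m.e ⟨a, h⟩ : B) = b
  | .vee m, a, b => (a = m.base ∧ (b = m.result1 ∨ b = m.result2)) ∨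
      ∃ h : a ≠ m.base, (m.e ⟨a, h⟩ : B) = b

/-- `Move.isIsotopy M` holds exactly when `M` is an isotopy move. -/
def Move.isIsotopy {A B : Type} : Move A B → Prop
  | .isotopy _ => True
  | _ => False

/-- `Move.isZeroHandle M` holds exactly when `M` is a 0-handle move. -/
def Move.isZeroHandle {A B : Type} : Move A B → Prop
  | .zero _ => True
  | _ => False

/-- `Move.isWedge M` holds exactly when `M` is a ∧-handle move. -/
def Move.isWedge {A B : Type} : Move A B → Prop
  | .wedge _ => True
  | _ => False

/-- `Move.isVee M` holds exactly when `M` is a ∨-handle move. -/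
def Move.isVee {A B : Type} : Move A B → Prop
  | .vee _ => True
  | _ => False

/-- Count (0 or 1) of 1-handles (∧- or ∨-handles) among a single move. -/
def Move.oneCount {A B : Type} : Move A B → ℕ
  | .wedge _ => 1
  | .vee _ => 1
  | _ => 0

/-- Count (0 or 1) of 0-handles among a single move. -/
def Move.zeroCount {A B : Type} : Move A B → ℕ
  | .zero _ => 1
  | _ => 0

/-- Count (0 or 1) of ∧-handles among a single move. -/
def Move.wedgeCount {A B : Type} : Move A B → ℕ
  | .wedge _ => 1
  | _ => 0

/-- Count (0 or 1) of ∨-handles among a single move. -/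
def Move.veeCount {A B : Type} : Move A B → ℕ
  | .vee _ => 1
  | _ => 0

/-- The value of `fB` on the born component if the move is a 0-handle, and `0` otherwise. -/
def Move.bornValue {A B : Type} (fB : B → ℚ) : Move A B → ℚ
  | .zero m => fB m.born
  | _ => 0

/-- A handle sequence of length `m`: finite sets of components `C 0, …, C m` connected by
elementary moves. -/
structure HandleSequence where
  m : ℕ
  C : ℕ → Type
  finite : ∀ k, Finite (C k)
  move : (k : Fin m) → Move (C k.val) (C (k.val + 1))

/-- The conditions a twist function must satisfy across a single elementary move. -/
def MoveTwistOK {A B : Type} (fA : A → ℚ) (fB : B → ℚ) : Move A B → Prop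
  | .isotopy m => ∀ a, fA a = fB (m.e a)
  | .zero m => 1 ≤ fB m.born ∧ ∀ a, fA a = fB (m.e a : B)
  | .wedge m => (1 / 2 : ℚ) ≤ fA m.base1 ∧ (1 / 2 : ℚ) ≤ fA m.base2 ∧
      fA m.base1 + fA m.base2 = fB m.result + 1 ∧
      ∀ a (h : a ≠ m.base1 ∧ a ≠ m.base2), fA a = fB (m.e ⟨a, h⟩ : B)
  | .vee m => 1 ≤ fA m.base ∧ fA m.base = fB m.result1 + fB m.result2 + 1 ∧
      ∀ a (h : a ≠ m.base), fA a = fB (m.e ⟨a, h⟩ : B)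

/-- A twist function on a handle sequence: a `½ℕ`-valued function on all components
satisfying the twist conditions across every elementary move. -/
def IsTwistFunction (H : HandleSequence) (f : ∀ k, H.C k → ℚ) : Prop :=
  (∀ k (x : H.C k), ∃ j : ℕ, f k x = (j : ℚ) / 2) ∧
    ∀ k : Fin H.m, MoveTwistOK (f k.val) (f (k.val + 1)) (H.move k)

/-- A twist function is full if all its values are integers and its value on the base of
every ∨-handle is at least 2. -/
def IsFullTwist (H : HandleSequence) (f : ∀ k, H.C k → ℚ) : Prop :=
  (∀ k (x : H.C k), ∃ j : ℕ, f k x = (j : ℚ)) ∧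
    ∀ (k : Fin H.m) (mv : VeeMove (H.C k.val) (H.C (k.val + 1))),
      H.move k = Move.vee mv → 2 ≤ f k.val mv.base

/-- A twist function is regular if its value on the born component of every 0-handle is 1. -/
def IsRegularTwist (H : HandleSequence) (f : ∀ k, H.C k → ℚ) : Prop :=
  ∀ (k : Fin H.m) (mv : ZeroHandleMove (H.C k.val) (H.C (k.val + 1))),
    H.move k = Move.zero mv → f (k.val + 1) mv.born = 1

/-- `ReachesBottom H k x` holds when there is a downward vertical path in the handle sequence
from the component `x ∈ C k` to a component of `C 0`. -/
inductive ReachesBottom (H : HandleSequence) : (k : ℕ) → H.C k → Prop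
  | base (x : H.C 0) : ReachesBottom H 0 x
  | step (k : Fin H.m) (x : H.C k.val) (y : H.C (k.val + 1)) :
      ReachesBottom H k.val x → (H.move k).rel x y → ReachesBottom H (k.val + 1) y

/-- Property A: the base of every ∨-handle admits a downward vertical path ending at the
bottom level `C 0`. -/
def PropertyA (H : HandleSequence) : Prop :=
  ∀ (k : Fin H.m) (mv : VeeMove (H.C k.val) (H.C (k.val + 1))),
    H.move k = Move.vee mv → ReachesBottom H k.val mv.base

/-! ### Auxiliary development for the construction of twist functions -/

open Classical in
/-- A canonical successor of a component under a move. -/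
noncomputable def Move.succ {A B : Type} : Move A B → A → B
  | .isotopy mI, a => mI.e a
  | .zero mZ, a => (mZ.e a : B)
  | .wedge mW, a =>
      if h : a = mW.base1 ∨ a = mW.base2 then mW.result else (mW.e ⟨a, not_or.mp h⟩ : B)
  | .vee mV, a => if h : a = mV.base then mV.result1 else (mV.e ⟨a, h⟩ : B)

theorem Move.rel_succ {A B : Type} (M : Move A B) (a : A) : M.rel a (M.succ a) := by
  cases M with
  | isotopy mI => simp [Move.succ, Move.rel]
  | zero mZ => simp [Move.succ, Move.rel]
  | wedge mW =>
      by_cases h : a = mW.base1 ∨ a = mW.base2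
      · exact Or.inl ⟨h, by simp [Move.succ, h]⟩
      · exact Or.inr ⟨not_or.mp h, by simp [Move.succ, h]⟩
  | vee mV =>
      by_cases h : a = mV.base
      · exact Or.inl ⟨h, Or.inl (by simp [Move.succ, h])⟩
      · exact Or.inr ⟨h, by simp [Move.succ, h]⟩

/-- The canonical upward path (token path) starting at `Λm`. -/
noncomputable def HandleSequence.token (H : HandleSequence) (Λm : H.C 0) :
    (k : ℕ) → k ≤ H.m → H.C k
  | 0, _ => Λm
  | k+1, h => (H.move ⟨k, h⟩).succ (H.token Λm k (Nat.le_of_succ_le h))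

open Classical in
/-- Indicator (0 or 1) of membership in the token path. -/
noncomputable def HandleSequence.tokBit (H : HandleSequence) (Λm : H.C 0)
    (j : ℕ) (y : H.C j) : ℕ :=
  if h : j ≤ H.m then (if y = H.token Λm j h then 1 else 0) else 0

theorem HandleSequence.token_succ (H : HandleSequence) (Λm : H.C 0) (k : Fin H.m) :
    H.token Λm (k.val + 1) k.isLt = (H.move k).succ (H.token Λm k.val (Nat.le_of_succ_le k.isLt)) :=
  rfl

open Classical in
theorem HandleSequence.tokBit_eq (H : HandleSequence) (Λm : H.C 0) {j : ℕ} (hj : j ≤ H.m)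
    (y : H.C j) :
    H.tokBit Λm j y = if y = H.token Λm j hj then 1 else 0 := dif_pos hj

theorem HandleSequence.tokBit_le_one (H : HandleSequence) (Λm : H.C 0) (j : ℕ) (y : H.C j) :
    H.tokBit Λm j y ≤ 1 := by
  unfold HandleSequence.tokBit
  split
  · split <;> omega
  · omega
section TokenLemmas

variable (H : HandleSequence) (Λm : H.C 0)

theorem HandleSequence.tok_isotopy (k : Fin H.m) (mI : IsotopyMove (H.C k.val) (H.C (k.val+1)))
    (hm : H.move k = .isotopy mI) (a : H.C k.val) :
    H.tokBit Λm k.val a = H.tokBit Λm (k.val + 1) (mI.e a) := by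
  have h1 : k.val ≤ H.m := Nat.le_of_succ_le k.isLt
  have hsucc : H.token Λm (k.val + 1) k.isLt = mI.e (H.token Λm k.val h1) := by
    rw [H.token_succ Λm k, hm]; rfl
  rw [H.tokBit_eq Λm h1, H.tokBit_eq Λm k.isLt, hsucc]
  by_cases h : a = H.token Λm k.val h1
  · rw [if_pos h, if_pos (by rw [h])]
  · rw [if_neg h, if_neg (fun he => h (mI.e.injective he))]

theorem HandleSequence.tok_zero (k : Fin H.m) (mZ : ZeroHandleMove (H.C k.val) (H.C (k.val+1)))
    (hm : H.move k = .zero mZ) (a : H.C k.val) :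
    H.tokBit Λm k.val a = H.tokBit Λm (k.val + 1) (mZ.e a : H.C (k.val+1)) := by
  have h1 : k.val ≤ H.m := Nat.le_of_succ_le k.isLt
  have hsucc : H.token Λm (k.val + 1) k.isLt = (mZ.e (H.token Λm k.val h1) : H.C (k.val+1)) := by
    rw [H.token_succ Λm k, hm]; rfl
  rw [H.tokBit_eq Λm h1, H.tokBit_eq Λm k.isLt, hsucc]
  by_cases h : a = H.token Λm k.val h1
  · rw [if_pos h, if_pos (by rw [h])]
  · rw [if_neg h, if_neg (fun he => h (mZ.e.injective (Subtype.coe_injective he)))]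

theorem HandleSequence.tok_zero_born (k : Fin H.m) (mZ : ZeroHandleMove (H.C k.val) (H.C (k.val+1)))
    (hm : H.move k = .zero mZ) :
    H.tokBit Λm (k.val + 1) mZ.born = 0 := by
  have h1 : k.val ≤ H.m := Nat.le_of_succ_le k.isLt
  have hsucc : H.token Λm (k.val + 1) k.isLt = (mZ.e (H.token Λm k.val h1) : H.C (k.val+1)) := by
    rw [H.token_succ Λm k, hm]; rfl
  rw [H.tokBit_eq Λm k.isLt, hsucc, if_neg (fun he => (mZ.e _).prop he.symm)]

theorem HandleSequence.tok_wedge (k : Fin H.m) (mW : WedgeMove (H.C k.val) (H.C (k.val+1)))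
    (hm : H.move k = .wedge mW) :
    H.tokBit Λm k.val mW.base1 + H.tokBit Λm k.val mW.base2
      = H.tokBit Λm (k.val + 1) mW.result := by
  classical
  have h1 : k.val ≤ H.m := Nat.le_of_succ_le k.isLt
  set t := H.token Λm k.val h1 with ht
  have hsucc : H.token Λm (k.val + 1) k.isLt =
      if h : t = mW.base1 ∨ t = mW.base2 then mW.result else (mW.e ⟨t, not_or.mp h⟩ : _) := by
    rw [H.token_succ Λm k, hm]; rfl
  rw [H.tokBit_eq Λm h1, H.tokBit_eq Λm h1, H.tokBit_eq Λm k.isLt, ← ht, hsucc]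
  by_cases hb : t = mW.base1 ∨ t = mW.base2
  · rw [dif_pos hb, if_pos rfl]
    rcases hb with hb | hb
    · rw [if_pos hb.symm, if_neg (fun he => mW.base_ne (hb ▸ he).symm)]
    · rw [if_pos hb.symm, if_neg (fun he => mW.base_ne (he.trans hb))]
  · rw [dif_neg hb]
    have hb' := not_or.mp hb
    rw [if_neg (fun he => hb'.1 he.symm), if_neg (fun he => hb'.2 he.symm),
      if_neg (fun he => (mW.e _).prop he.symm)]

theorem HandleSequence.tok_wedge_e (k : Fin H.m) (mW : WedgeMove (H.C k.val) (H.C (k.val+1)))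
    (hm : H.move k = .wedge mW) (a : H.C k.val) (h : a ≠ mW.base1 ∧ a ≠ mW.base2) :
    H.tokBit Λm k.val a = H.tokBit Λm (k.val + 1) (mW.e ⟨a, h⟩ : H.C (k.val+1)) := by
  classical
  have h1 : k.val ≤ H.m := Nat.le_of_succ_le k.isLt
  set t := H.token Λm k.val h1 with ht
  have hsucc : H.token Λm (k.val + 1) k.isLt =
      if hb : t = mW.base1 ∨ t = mW.base2 then mW.result else (mW.e ⟨t, not_or.mp hb⟩ : _) := by
    rw [H.token_succ Λm k, hm]; rfl
  rw [H.tokBit_eq Λm h1, H.tokBit_eq Λm k.isLt, ← ht, hsucc]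
  by_cases hb : t = mW.base1 ∨ t = mW.base2
  · rw [dif_pos hb]
    have hat : a ≠ t := by rintro rfl; exact hb.elim h.1 h.2
    rw [if_neg hat, if_neg (fun he => (mW.e ⟨a, h⟩).prop he)]
  · rw [dif_neg hb]
    by_cases hat : a = t
    · rw [if_pos hat, if_pos (by subst hat; rfl)]
    · rw [if_neg hat, if_neg (fun he => hat (by
        have := mW.e.injective (Subtype.coe_injective he)
        exact congrArg Subtype.val this))]

theorem HandleSequence.tok_vee (k : Fin H.m) (mV : VeeMove (H.C k.val) (H.C (k.val+1)))
    (hm : H.move k = .vee mV) :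
    H.tokBit Λm k.val mV.base
      = H.tokBit Λm (k.val + 1) mV.result1 + H.tokBit Λm (k.val + 1) mV.result2 := by
  classical
  have h1 : k.val ≤ H.m := Nat.le_of_succ_le k.isLt
  set t := H.token Λm k.val h1 with ht
  have hsucc : H.token Λm (k.val + 1) k.isLt =
      if hb : t = mV.base then mV.result1 else (mV.e ⟨t, hb⟩ : _) := by
    rw [H.token_succ Λm k, hm]; rfl
  rw [H.tokBit_eq Λm h1, H.tokBit_eq Λm k.isLt, H.tokBit_eq Λm k.isLt, ← ht, hsucc]
  by_cases hb : t = mV.base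
  · rw [dif_pos hb, if_pos hb.symm, if_pos rfl, if_neg (fun he => mV.result_ne he.symm)]
  · rw [dif_neg hb, if_neg (fun he => hb he.symm),
      if_neg (fun he => (mV.e _).prop.1 he.symm), if_neg (fun he => (mV.e _).prop.2 he.symm)]

theorem HandleSequence.tok_vee_e (k : Fin H.m) (mV : VeeMove (H.C k.val) (H.C (k.val+1)))
    (hm : H.move k = .vee mV) (a : H.C k.val) (h : a ≠ mV.base) :
    H.tokBit Λm k.val a = H.tokBit Λm (k.val + 1) (mV.e ⟨a, h⟩ : H.C (k.val+1)) := by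
  classical
  have h1 : k.val ≤ H.m := Nat.le_of_succ_le k.isLt
  set t := H.token Λm k.val h1 with ht
  have hsucc : H.token Λm (k.val + 1) k.isLt =
      if hb : t = mV.base then mV.result1 else (mV.e ⟨t, hb⟩ : _) := by
    rw [H.token_succ Λm k, hm]; rfl
  rw [H.tokBit_eq Λm h1, H.tokBit_eq Λm k.isLt, ← ht, hsucc]
  by_cases hb : t = mV.base
  · rw [dif_pos hb]
    have hat : a ≠ t := fun he => h (he.trans hb)
    rw [if_neg hat, if_neg (fun he => (mV.e ⟨a, h⟩).prop.1 he)]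
  · rw [dif_neg hb]
    by_cases hat : a = t
    · rw [if_pos hat, if_pos (by subst hat; rfl)]
    · rw [if_neg hat, if_neg (fun he => hat (by
        have := mV.e.injective (Subtype.coe_injective he)
        exact congrArg Subtype.val this))]

theorem HandleSequence.tokBit_top (Λp : H.C H.m) (hΛp : ∀ x : H.C H.m, x = Λp) :
    H.tokBit Λm H.m Λp = 1 := by
  rw [H.tokBit_eq Λm le_rfl, if_pos (hΛp _).symm]

end TokenLemmas
/-- A family of downward paths, one for (the base of) each ∨-handle. -/
structure PathFam (H : HandleSequence) where
  Q : Fin H.m → (j : ℕ) → H.C j → Prop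
  le : ∀ i j y, Q i j y → j ≤ i.val
  uniq : ∀ i j y y', Q i j y → Q i j y' → y = y'
  down : ∀ (i k : Fin H.m) (y : H.C (k.val + 1)), Q i (k.val + 1) y →
      (∃ x', Q i k.val x' ∧ (H.move k).rel x' y) ∨ (∀ x', ¬ (H.move k).rel x' y)
  up : ∀ (i k : Fin H.m) (x' : H.C k.val), Q i k.val x' → k.val < i.val →
      ∃ y, Q i (k.val + 1) y ∧ (H.move k).rel x' y
  vee_base : ∀ (i : Fin H.m) mv, H.move i = Move.vee mv → Q i i.val mv.base
  not_vee : ∀ (i : Fin H.m), ¬ (H.move i).isVee → ∀ j y, ¬ Q i j y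

namespace PathFam

open Classical in
/-- Contribution (0 or 2) of the `i`-th path to the twist value at a component. -/
noncomputable def cnt {H : HandleSequence} (P : PathFam H) (i : Fin H.m) (j : ℕ) (y : H.C j) : ℕ :=
  if P.Q i j y then 2 else 0

/-- Total path contribution at a component. -/
noncomputable def NN {H : HandleSequence} (P : PathFam H) (j : ℕ) (y : H.C j) : ℕ :=
  ∑ i, P.cnt i j y

variable {H : HandleSequence} (P : PathFam H)

theorem cnt_of_level_gt {i : Fin H.m} {j : ℕ} (hj : i.val < j) (y : H.C j) :
    P.cnt i j y = 0 := by
  rw [cnt, if_neg (fun hQ => absurd (P.le i j y hQ) (by omega))]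

theorem cnt_congr {i : Fin H.m} {j j' : ℕ} {y : H.C j} {y' : H.C j'}
    (h : P.Q i j y ↔ P.Q i j' y') : P.cnt i j y = P.cnt i j' y' := by
  classical
  rw [cnt, cnt]
  by_cases hQ : P.Q i j y
  · rw [if_pos hQ, if_pos (h.mp hQ)]
  · rw [if_neg hQ, if_neg (fun h' => hQ (h.mpr h'))]

theorem cnt_of_not_vee {i : Fin H.m} (hnv : ¬ (H.move i).isVee) (j : ℕ) (y : H.C j) :
    P.cnt i j y = 0 := by
  rw [cnt, if_neg (P.not_vee i hnv j y)]

theorem cnt_isotopy (k : Fin H.m) (mI : IsotopyMove (H.C k.val) (H.C (k.val+1)))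
    (hm : H.move k = .isotopy mI) (i : Fin H.m) (a : H.C k.val) :
    P.cnt i k.val a = P.cnt i (k.val + 1) (mI.e a) := by
  rcases Nat.lt_trichotomy i.val k.val with h | h | h
  · rw [P.cnt_of_level_gt h, P.cnt_of_level_gt (by omega)]
  · have hik : i = k := Fin.ext h
    subst hik
    have hnv : ¬ (H.move i).isVee := by rw [hm]; simp [Move.isVee]
    rw [P.cnt_of_not_vee hnv, P.cnt_of_not_vee hnv]
  · refine P.cnt_congr ⟨fun hQ => ?_, fun hQ => ?_⟩
    · obtain ⟨y, hy, hr⟩ := P.up i k a hQ h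
      rw [hm] at hr
      simp only [Move.rel] at hr
      exact hr ▸ hy
    · rcases P.down i k _ hQ with ⟨x', hx', hr⟩ | hnone
      · rw [hm] at hr
        simp only [Move.rel] at hr
        have := mI.e.injective hr
        exact this ▸ hx'
      · exact absurd (by rw [hm]; exact rfl : (H.move k).rel a (mI.e a)) (hnone a)

theorem cnt_zero (k : Fin H.m) (mZ : ZeroHandleMove (H.C k.val) (H.C (k.val+1)))
    (hm : H.move k = .zero mZ) (i : Fin H.m) (a : H.C k.val) :
    P.cnt i k.val a = P.cnt i (k.val + 1) (mZ.e a : H.C (k.val+1)) := by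
  rcases Nat.lt_trichotomy i.val k.val with h | h | h
  · rw [P.cnt_of_level_gt h, P.cnt_of_level_gt (by omega)]
  · have hik : i = k := Fin.ext h
    subst hik
    have hnv : ¬ (H.move i).isVee := by rw [hm]; simp [Move.isVee]
    rw [P.cnt_of_not_vee hnv, P.cnt_of_not_vee hnv]
  · refine P.cnt_congr ⟨fun hQ => ?_, fun hQ => ?_⟩
    · obtain ⟨y, hy, hr⟩ := P.up i k a hQ h
      rw [hm] at hr
      simp only [Move.rel] at hr
      exact hr ▸ hy
    · rcases P.down i k _ hQ with ⟨x', hx', hr⟩ | hnone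
      · rw [hm] at hr
        simp only [Move.rel] at hr
        have := mZ.e.injective (Subtype.coe_injective hr)
        exact this ▸ hx'
      · exact absurd (by rw [hm]; exact rfl : (H.move k).rel a (mZ.e a : H.C (k.val+1)))
          (hnone a)

end PathFam
namespace PathFam

variable {H : HandleSequence} (P : PathFam H)

theorem cnt_wedge_base (k : Fin H.m) (mW : WedgeMove (H.C k.val) (H.C (k.val+1)))
    (hm : H.move k = .wedge mW) (i : Fin H.m) :
    P.cnt i k.val mW.base1 + P.cnt i k.val mW.base2 = P.cnt i (k.val + 1) mW.result := by
  classical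
  rcases Nat.lt_trichotomy i.val k.val with h | h | h
  · rw [P.cnt_of_level_gt h, P.cnt_of_level_gt h, P.cnt_of_level_gt (by omega)]
  · have hik : i = k := Fin.ext h
    subst hik
    have hnv : ¬ (H.move i).isVee := by rw [hm]; simp [Move.isVee]
    rw [P.cnt_of_not_vee hnv, P.cnt_of_not_vee hnv, P.cnt_of_not_vee hnv]
  · have hiff : P.Q i (k.val + 1) mW.result ↔ P.Q i k.val mW.base1 ∨ P.Q i k.val mW.base2 := by
      constructor
      · intro hQ
        rcases P.down i k _ hQ with ⟨x', hx', hr⟩ | hnone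
        · rw [hm] at hr
          rcases hr with ⟨hb, -⟩ | ⟨h', hr⟩
          · rcases hb with hb | hb
            · exact Or.inl (hb ▸ hx')
            · exact Or.inr (hb ▸ hx')
          · exact absurd hr (mW.e _).prop
        · exact absurd (by rw [hm]; exact Or.inl ⟨Or.inl rfl, rfl⟩ :
            (H.move k).rel mW.base1 mW.result) (hnone _)
      · intro hQ
        rcases hQ with hQ | hQ
        · obtain ⟨y, hy, hr⟩ := P.up i k _ hQ h
          rw [hm] at hr
          rcases hr with ⟨-, hy'⟩ | ⟨h', -⟩
          · exact hy' ▸ hy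
          · exact absurd rfl h'.1
        · obtain ⟨y, hy, hr⟩ := P.up i k _ hQ h
          rw [hm] at hr
          rcases hr with ⟨-, hy'⟩ | ⟨h', -⟩
          · exact hy' ▸ hy
          · exact absurd rfl h'.2
    have hnot : ¬ (P.Q i k.val mW.base1 ∧ P.Q i k.val mW.base2) := by
      rintro ⟨h1, h2⟩
      exact mW.base_ne (P.uniq i k.val _ _ h1 h2)
    rw [cnt, cnt, cnt]
    by_cases h1 : P.Q i k.val mW.base1
    · rw [if_pos h1, if_neg (fun h2 => hnot ⟨h1, h2⟩), if_pos (hiff.mpr (Or.inl h1))]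
    · by_cases h2 : P.Q i k.val mW.base2
      · rw [if_neg h1, if_pos h2, if_pos (hiff.mpr (Or.inr h2))]
      · rw [if_neg h1, if_neg h2, if_neg (fun hr => (hiff.mp hr).elim h1 h2)]

theorem cnt_wedge_e (k : Fin H.m) (mW : WedgeMove (H.C k.val) (H.C (k.val+1)))
    (hm : H.move k = .wedge mW) (i : Fin H.m) (a : H.C k.val)
    (h : a ≠ mW.base1 ∧ a ≠ mW.base2) :
    P.cnt i k.val a = P.cnt i (k.val + 1) (mW.e ⟨a, h⟩ : H.C (k.val+1)) := by
  rcases Nat.lt_trichotomy i.val k.val with hlt | heq | hgt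
  · rw [P.cnt_of_level_gt hlt, P.cnt_of_level_gt (by omega)]
  · have hik : i = k := Fin.ext heq
    subst hik
    have hnv : ¬ (H.move i).isVee := by rw [hm]; simp [Move.isVee]
    rw [P.cnt_of_not_vee hnv, P.cnt_of_not_vee hnv]
  · refine P.cnt_congr ⟨fun hQ => ?_, fun hQ => ?_⟩
    · obtain ⟨y, hy, hr⟩ := P.up i k a hQ hgt
      rw [hm] at hr
      rcases hr with ⟨hb, -⟩ | ⟨h', hr⟩
      · exact absurd hb (not_or.mpr h)
      · exact hr ▸ hy
    · rcases P.down i k _ hQ with ⟨x', hx', hr⟩ | hnone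
      · rw [hm] at hr
        rcases hr with ⟨-, hr⟩ | ⟨h', hr⟩
        · exact absurd hr (mW.e ⟨a, h⟩).prop
        · have := mW.e.injective (Subtype.coe_injective hr)
          have hxa : x' = a := congrArg Subtype.val this
          exact hxa ▸ hx'
      · exact absurd (by rw [hm]; exact Or.inr ⟨h, rfl⟩ :
          (H.move k).rel a (mW.e ⟨a, h⟩ : H.C (k.val+1))) (hnone a)

theorem cnt_vee (k : Fin H.m) (mV : VeeMove (H.C k.val) (H.C (k.val+1)))
    (hm : H.move k = .vee mV) (i : Fin H.m) :
    P.cnt i k.val mV.base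
      = P.cnt i (k.val + 1) mV.result1 + P.cnt i (k.val + 1) mV.result2
        + (if i = k then 2 else 0) := by
  classical
  rcases Nat.lt_trichotomy i.val k.val with h | h | h
  · have hne : i ≠ k := fun he => by omega
    rw [P.cnt_of_level_gt h, P.cnt_of_level_gt (by omega), P.cnt_of_level_gt (by omega),
      if_neg hne]
  · have hik : i = k := Fin.ext h
    subst hik
    rw [cnt, if_pos (P.vee_base i mV hm), P.cnt_of_level_gt (by omega),
      P.cnt_of_level_gt (by omega), if_pos rfl]
  · have hne : i ≠ k := fun he => by omega
    rw [if_neg hne]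
    have hiff : P.Q i k.val mV.base ↔
        P.Q i (k.val + 1) mV.result1 ∨ P.Q i (k.val + 1) mV.result2 := by
      constructor
      · intro hQ
        obtain ⟨y, hy, hr⟩ := P.up i k _ hQ h
        rw [hm] at hr
        rcases hr with ⟨-, hy'⟩ | ⟨h', -⟩
        · rcases hy' with hy' | hy'
          · exact Or.inl (hy' ▸ hy)
          · exact Or.inr (hy' ▸ hy)
        · exact absurd rfl h'
      · intro hQ
        rcases hQ with hQ | hQ
        · rcases P.down i k _ hQ with ⟨x', hx', hr⟩ | hnone
          · rw [hm] at hr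
            rcases hr with ⟨hb, -⟩ | ⟨h', hr⟩
            · exact hb ▸ hx'
            · exact absurd hr (mV.e _).prop.1
          · exact absurd (by rw [hm]; exact Or.inl ⟨rfl, Or.inl rfl⟩ :
              (H.move k).rel mV.base mV.result1) (hnone _)
        · rcases P.down i k _ hQ with ⟨x', hx', hr⟩ | hnone
          · rw [hm] at hr
            rcases hr with ⟨hb, -⟩ | ⟨h', hr⟩
            · exact hb ▸ hx'
            · exact absurd hr (mV.e _).prop.2
          · exact absurd (by rw [hm]; exact Or.inl ⟨rfl, Or.inr rfl⟩ :
              (H.move k).rel mV.base mV.result2) (hnone _)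
    have hnot : ¬ (P.Q i (k.val+1) mV.result1 ∧ P.Q i (k.val+1) mV.result2) := by
      rintro ⟨h1, h2⟩
      exact mV.result_ne (P.uniq i _ _ _ h1 h2)
    rw [cnt, cnt, cnt]
    by_cases h1 : P.Q i (k.val+1) mV.result1
    · rw [if_pos h1, if_neg (fun h2 => hnot ⟨h1, h2⟩), if_pos (hiff.mpr (Or.inl h1))]
    · by_cases h2 : P.Q i (k.val+1) mV.result2
      · rw [if_neg h1, if_pos h2, if_pos (hiff.mpr (Or.inr h2))]
      · rw [if_neg h1, if_neg h2, if_neg (fun hb => (hiff.mp hb).elim h1 h2)]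

theorem cnt_vee_e (k : Fin H.m) (mV : VeeMove (H.C k.val) (H.C (k.val+1)))
    (hm : H.move k = .vee mV) (i : Fin H.m) (a : H.C k.val) (h : a ≠ mV.base) :
    P.cnt i k.val a = P.cnt i (k.val + 1) (mV.e ⟨a, h⟩ : H.C (k.val+1)) := by
  rcases Nat.lt_trichotomy i.val k.val with hlt | heq | hgt
  · rw [P.cnt_of_level_gt hlt, P.cnt_of_level_gt (by omega)]
  · have hik : i = k := Fin.ext heq
    subst hik
    have hQa : ¬ P.Q i i.val a := fun hQ => h (P.uniq i i.val _ _ hQ (P.vee_base i mV hm))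
    rw [cnt, if_neg hQa, P.cnt_of_level_gt (by omega)]
  · refine P.cnt_congr ⟨fun hQ => ?_, fun hQ => ?_⟩
    · obtain ⟨y, hy, hr⟩ := P.up i k a hQ hgt
      rw [hm] at hr
      rcases hr with ⟨hb, -⟩ | ⟨h', hr⟩
      · exact absurd hb h
      · exact hr ▸ hy
    · rcases P.down i k _ hQ with ⟨x', hx', hr⟩ | hnone
      · rw [hm] at hr
        rcases hr with ⟨-, hr⟩ | ⟨h', hr⟩
        · rcases hr with hr | hr
          · exact absurd hr (mV.e ⟨a, h⟩).prop.1
          · exact absurd hr (mV.e ⟨a, h⟩).prop.2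
        · have := mV.e.injective (Subtype.coe_injective hr)
          have hxa : x' = a := congrArg Subtype.val this
          exact hxa ▸ hx'
      · exact absurd (by rw [hm]; exact Or.inr ⟨h, rfl⟩ :
          (H.move k).rel a (mV.e ⟨a, h⟩ : H.C (k.val+1))) (hnone a)

end PathFam
namespace PathFam

variable {H : HandleSequence} (P : PathFam H) (Λm : H.C 0)

/-- The twist function associated to a path family and the token path. -/
noncomputable def f (j : ℕ) (y : H.C j) : ℚ :=
  1 + (P.NN j y : ℚ) - (H.tokBit Λm j y : ℚ) / 2

theorem f_half (j : ℕ) (y : H.C j) : ∃ n : ℕ, P.f Λm j y = (n : ℚ) / 2 := by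
  refine ⟨2 + 2 * P.NN j y - H.tokBit Λm j y, ?_⟩
  have h := H.tokBit_le_one Λm j y
  rw [PathFam.f, Nat.cast_sub (by omega)]
  push_cast
  ring

theorem f_ge_half (j : ℕ) (y : H.C j) : (1 / 2 : ℚ) ≤ P.f Λm j y := by
  have h := H.tokBit_le_one Λm j y
  have h' : (H.tokBit Λm j y : ℚ) ≤ 1 := by exact_mod_cast h
  have h'' : (0 : ℚ) ≤ (P.NN j y : ℚ) := Nat.cast_nonneg _
  rw [PathFam.f]
  linarith

theorem NN_top (j : ℕ) (hj : H.m ≤ j) (y : H.C j) : P.NN j y = 0 :=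
  Finset.sum_eq_zero fun i _ => P.cnt_of_level_gt (by omega) y

theorem moveOK (k : Fin H.m) :
    MoveTwistOK (P.f Λm k.val) (P.f Λm (k.val + 1)) (H.move k) := by
  cases hm : H.move k with
  | isotopy mI =>
      intro a
      have hN : P.NN k.val a = P.NN (k.val + 1) (mI.e a) :=
        Finset.sum_congr rfl fun i _ => P.cnt_isotopy k mI hm i a
      show P.f Λm k.val a = P.f Λm (k.val + 1) (mI.e a)
      rw [PathFam.f, PathFam.f, hN, H.tok_isotopy Λm k mI hm a]
  | zero mZ =>
      constructor
      · have hN : (0 : ℚ) ≤ (P.NN (k.val + 1) mZ.born : ℚ) := Nat.cast_nonneg _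
        show (1 : ℚ) ≤ P.f Λm (k.val + 1) mZ.born
        rw [PathFam.f, H.tok_zero_born Λm k mZ hm]
        push_cast
        linarith
      · intro a
        have hN : P.NN k.val a = P.NN (k.val + 1) (mZ.e a : H.C (k.val + 1)) :=
          Finset.sum_congr rfl fun i _ => P.cnt_zero k mZ hm i a
        show P.f Λm k.val a = P.f Λm (k.val + 1) (mZ.e a : H.C (k.val + 1))
        rw [PathFam.f, PathFam.f, hN, H.tok_zero Λm k mZ hm a]
  | wedge mW =>
      refine ⟨P.f_ge_half Λm _ _, P.f_ge_half Λm _ _, ?_, fun a h => ?_⟩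
      · have hN : P.NN k.val mW.base1 + P.NN k.val mW.base2 = P.NN (k.val + 1) mW.result := by
          rw [NN, NN, NN, ← Finset.sum_add_distrib]
          exact Finset.sum_congr rfl fun i _ => P.cnt_wedge_base k mW hm i
        have ht := H.tok_wedge Λm k mW hm
        have hN' : (P.NN k.val mW.base1 : ℚ) + (P.NN k.val mW.base2 : ℚ)
            = (P.NN (k.val + 1) mW.result : ℚ) := by exact_mod_cast congrArg (Nat.cast (R := ℚ)) hN
        have ht' : (H.tokBit Λm k.val mW.base1 : ℚ) + (H.tokBit Λm k.val mW.base2 : ℚ)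
            = (H.tokBit Λm (k.val + 1) mW.result : ℚ) := by
          exact_mod_cast congrArg (Nat.cast (R := ℚ)) ht
        rw [PathFam.f, PathFam.f, PathFam.f]
        linarith
      · have hN : P.NN k.val a = P.NN (k.val + 1) (mW.e ⟨a, h⟩ : H.C (k.val + 1)) :=
          Finset.sum_congr rfl fun i _ => P.cnt_wedge_e k mW hm i a h
        show P.f Λm k.val a = P.f Λm (k.val + 1) (mW.e ⟨a, h⟩ : H.C (k.val + 1))
        rw [PathFam.f, PathFam.f, hN, H.tok_wedge_e Λm k mW hm a h]
  | vee mV =>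
      have hN : P.NN k.val mV.base
          = P.NN (k.val + 1) mV.result1 + P.NN (k.val + 1) mV.result2 + 2 := by
        rw [NN, NN, NN]
        calc ∑ i, P.cnt i k.val mV.base
            = ∑ i, (P.cnt i (k.val + 1) mV.result1 + P.cnt i (k.val + 1) mV.result2
              + if i = k then 2 else 0) :=
              Finset.sum_congr rfl fun i _ => P.cnt_vee k mV hm i
          _ = (∑ i, (P.cnt i (k.val + 1) mV.result1 + P.cnt i (k.val + 1) mV.result2))
              + ∑ i : Fin H.m, (if i = k then 2 else 0) := Finset.sum_add_distrib
          _ = (∑ i, P.cnt i (k.val + 1) mV.result1) + (∑ i, P.cnt i (k.val + 1) mV.result2)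
              + 2 := by
              rw [Finset.sum_add_distrib, Finset.sum_ite_eq' Finset.univ k (fun _ => 2),
                if_pos (Finset.mem_univ k)]
      refine ⟨?_, ?_, fun a h => ?_⟩
      · have h2 : 2 ≤ P.NN k.val mV.base := hN ▸ by omega
        have h2' : (2 : ℚ) ≤ (P.NN k.val mV.base : ℚ) := by exact_mod_cast h2
        have ht := H.tokBit_le_one Λm k.val mV.base
        have ht' : (H.tokBit Λm k.val mV.base : ℚ) ≤ 1 := by exact_mod_cast ht
        show (1 : ℚ) ≤ P.f Λm k.val mV.base
        rw [PathFam.f]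
        linarith
      · have ht := H.tok_vee Λm k mV hm
        have hN' : (P.NN k.val mV.base : ℚ)
            = (P.NN (k.val + 1) mV.result1 : ℚ) + (P.NN (k.val + 1) mV.result2 : ℚ) + 2 := by
          exact_mod_cast congrArg (Nat.cast (R := ℚ)) hN
        have ht' : (H.tokBit Λm k.val mV.base : ℚ)
            = (H.tokBit Λm (k.val + 1) mV.result1 : ℚ)
              + (H.tokBit Λm (k.val + 1) mV.result2 : ℚ) := by
          exact_mod_cast congrArg (Nat.cast (R := ℚ)) ht
        show P.f Λm k.val mV.base
            = P.f Λm (k.val + 1) mV.result1 + P.f Λm (k.val + 1) mV.result2 + 1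
        rw [PathFam.f, PathFam.f, PathFam.f]
        linarith
      · have hN : P.NN k.val a = P.NN (k.val + 1) (mV.e ⟨a, h⟩ : H.C (k.val + 1)) :=
          Finset.sum_congr rfl fun i _ => P.cnt_vee_e k mV hm i a h
        show P.f Λm k.val a = P.f Λm (k.val + 1) (mV.e ⟨a, h⟩ : H.C (k.val + 1))
        rw [PathFam.f, PathFam.f, hN, H.tok_vee_e Λm k mV hm a h]

theorem isTwist : IsTwistFunction H (P.f Λm) :=
  ⟨fun j y => P.f_half Λm j y, fun k => P.moveOK Λm k⟩

theorem f_top (Λp : H.C H.m) (hΛp : ∀ x : H.C H.m, x = Λp) :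
    P.f Λm H.m Λp = 1 / 2 := by
  rw [PathFam.f, P.NN_top H.m le_rfl, H.tokBit_top Λm Λp hΛp]
  norm_num

theorem regular
    (hb : ∀ (k : Fin H.m) (mZ : ZeroHandleMove (H.C k.val) (H.C (k.val + 1))),
      H.move k = .zero mZ → ∀ i, ¬ P.Q i (k.val + 1) mZ.born) :
    IsRegularTwist H (P.f Λm) := by
  intro k mZ hm
  have hN : P.NN (k.val + 1) mZ.born = 0 :=
    Finset.sum_eq_zero fun i _ => by rw [cnt, if_neg (hb k mZ hm i)]
  rw [PathFam.f, hN, H.tok_zero_born Λm k mZ hm]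
  norm_num

end PathFam
/-- The predicate selecting exactly the component `x` at level `k`. -/
def levelSing (H : HandleSequence) (k : ℕ) (x : H.C k) : (j : ℕ) → H.C j → Prop :=
  fun j z => ∃ h : j = k, h ▸ z = x

theorem levelSing_self (H : HandleSequence) (k : ℕ) (x : H.C k) : levelSing H k x k x :=
  ⟨rfl, rfl⟩

theorem levelSing_level {H : HandleSequence} {k : ℕ} {x : H.C k} {j : ℕ} {z : H.C j}
    (h : levelSing H k x j z) : j = k := h.1

theorem levelSing_eq {H : HandleSequence} {k : ℕ} {x z : H.C k}
    (h : levelSing H k x k z) : z = x := by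
  obtain ⟨h', hz⟩ := h
  exact hz

/-- Extending a downward path upward by one step. -/
theorem path_extend (H : HandleSequence) (k : Fin H.m) (x' : H.C k.val) (x : H.C (k.val + 1))
    (hrel : (H.move k).rel x' x) (Q : (j : ℕ) → H.C j → Prop)
    (hQ1 : Q k.val x') (hQle : ∀ j y, Q j y → j ≤ k.val)
    (hQuniq : ∀ j y y', Q j y → Q j y' → y = y')
    (hQup : ∀ (k₂ : Fin H.m) (x₂ : H.C k₂.val), Q k₂.val x₂ → k₂.val < k.val →
      ∃ y, Q (k₂.val + 1) y ∧ (H.move k₂).rel x₂ y) :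
    ∃ Q' : (j : ℕ) → H.C j → Prop,
      Q' (k.val + 1) x ∧ (∀ j y, Q' j y → j ≤ k.val + 1) ∧
      (∀ j y y', Q' j y → Q' j y' → y = y') ∧
      (∀ (k₂ : Fin H.m) (y : H.C (k₂.val + 1)), Q' (k₂.val + 1) y →
        Q (k₂.val + 1) y ∨ (∃ x₂, Q' k₂.val x₂ ∧ (H.move k₂).rel x₂ y)) ∧
      (∀ (k₂ : Fin H.m) (x₂ : H.C k₂.val), Q' k₂.val x₂ → k₂.val < k.val + 1 →
        ∃ y, Q' (k₂.val + 1) y ∧ (H.move k₂).rel x₂ y) ∧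
      (∀ j y, Q j y → Q' j y) := by
  refine ⟨fun j z => Q j z ∨ levelSing H (k.val + 1) x j z,
    Or.inr (levelSing_self H _ x), ?_, ?_, ?_, ?_, fun j y h => Or.inl h⟩
  · rintro j y (hy | hy)
    · exact (hQle j y hy).trans (Nat.le_succ _)
    · exact Nat.le_of_eq (levelSing_level hy)
  · rintro j y y' (hy | hy) (hy' | hy')
    · exact hQuniq j y y' hy hy'
    · exact absurd (hQle j y hy) (by rw [levelSing_level hy']; omega)
    · exact absurd (hQle j y' hy') (by rw [levelSing_level hy]; omega)
    · have h1 := levelSing_level hy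
      subst h1
      rw [levelSing_eq hy, levelSing_eq hy']
  · rintro k₂ y (hy | hy)
    · exact Or.inl hy
    · have hl := levelSing_level hy
      have hk2 : k₂ = k := Fin.ext (by omega)
      subst hk2
      obtain rfl := levelSing_eq hy
      exact Or.inr ⟨x', Or.inl hQ1, hrel⟩
  · rintro k₂ x₂ (hx | hx) hlt
    · rcases Nat.lt_or_ge k₂.val k.val with h2 | h2
      · obtain ⟨y, hy, hr⟩ := hQup k₂ x₂ hx h2
        exact ⟨y, Or.inl hy, hr⟩
      · have hk2 : k₂ = k := Fin.ext (le_antisymm (hQle _ _ hx) h2)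
        subst hk2
        obtain rfl := hQuniq _ _ _ hx hQ1
        exact ⟨x, Or.inr (levelSing_self H _ x), hrel⟩
    · exact absurd (levelSing_level hx) (by omega)
/-- Existence of a maximal downward path from any component. -/
theorem exists_maxpath (H : HandleSequence) :
    ∀ (k : ℕ), k ≤ H.m → ∀ x : H.C k, ∃ Q : (j : ℕ) → H.C j → Prop,
      Q k x ∧ (∀ j y, Q j y → j ≤ k) ∧ (∀ j y y', Q j y → Q j y' → y = y') ∧
      (∀ (k₂ : Fin H.m) (y : H.C (k₂.val + 1)), Q (k₂.val + 1) y →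
        (∃ x', Q k₂.val x' ∧ (H.move k₂).rel x' y) ∨ (∀ x', ¬ (H.move k₂).rel x' y)) ∧
      (∀ (k₂ : Fin H.m) (x' : H.C k₂.val), Q k₂.val x' → k₂.val < k →
        ∃ y, Q (k₂.val + 1) y ∧ (H.move k₂).rel x' y) := by
  intro k
  induction k with
  | zero =>
      intro _ x
      refine ⟨levelSing H 0 x, levelSing_self H 0 x, ?_, ?_, ?_, ?_⟩
      · intro j y hy
        exact Nat.le_of_eq (levelSing_level hy)
      · intro j y y' hy hy'
        have h1 := levelSing_level hy
        subst h1
        rw [levelSing_eq hy, levelSing_eq hy']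
      · intro k₂ y hy
        exact absurd (levelSing_level hy) (by omega)
      · intro k₂ x' hx hlt
        exact absurd hlt (by omega)
  | succ k IH =>
      intro hk1 x
      have hkm : k < H.m := hk1
      by_cases hpred : ∃ x', (H.move ⟨k, hkm⟩).rel x' x
      · obtain ⟨x', hrel⟩ := hpred
        obtain ⟨Q, h1, hle, huniq, hdown, hup⟩ := IH (Nat.le_of_succ_le hk1) x'
        obtain ⟨Q', h1', hle', huniq', hdown', hup', hemb⟩ :=
          path_extend H ⟨k, hkm⟩ x' x hrel Q h1 hle huniq hup
        refine ⟨Q', h1', hle', huniq', ?_, hup'⟩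
        intro k₂ y hy
        rcases hdown' k₂ y hy with hold | ⟨x₂, hx₂, hr⟩
        · rcases hdown k₂ y hold with ⟨x₂, hx₂, hr⟩ | hnone
          · exact Or.inl ⟨x₂, hemb _ _ hx₂, hr⟩
          · exact Or.inr hnone
        · exact Or.inl ⟨x₂, hx₂, hr⟩
      · refine ⟨levelSing H (k+1) x, levelSing_self H _ x, ?_, ?_, ?_, ?_⟩
        · intro j y hy
          exact Nat.le_of_eq (levelSing_level hy)
        · intro j y y' hy hy'
          have hl := levelSing_level hy
          subst hl
          rw [levelSing_eq hy, levelSing_eq hy']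
        · intro k₂ y hy
          have hl := levelSing_level hy
          have hk2 : k₂ = ⟨k, hkm⟩ := Fin.ext (by simpa using hl)
          subst hk2
          obtain rfl := levelSing_eq hy
          exact Or.inr (fun x'' hr => hpred ⟨x'', hr⟩)
        · intro k₂ x'' hx hlt
          exact absurd (levelSing_level hx) (by omega)

/-- Existence of a downward path to the bottom from a component reaching the bottom. -/
theorem exists_bottompath (H : HandleSequence) (k : ℕ) (x : H.C k)
    (hx : ReachesBottom H k x) :
    ∃ Q : (j : ℕ) → H.C j → Prop,
      Q k x ∧ (∀ j y, Q j y → j ≤ k) ∧ (∀ j y y', Q j y → Q j y' → y = y') ∧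
      (∀ (k₂ : Fin H.m) (y : H.C (k₂.val + 1)), Q (k₂.val + 1) y →
        ∃ x', Q k₂.val x' ∧ (H.move k₂).rel x' y) ∧
      (∀ (k₂ : Fin H.m) (x' : H.C k₂.val), Q k₂.val x' → k₂.val < k →
        ∃ y, Q (k₂.val + 1) y ∧ (H.move k₂).rel x' y) := by
  induction hx with
  | base x0 =>
      refine ⟨levelSing H 0 x0, levelSing_self H 0 x0, ?_, ?_, ?_, ?_⟩
      · intro j y hy
        exact Nat.le_of_eq (levelSing_level hy)
      · intro j y y' hy hy'
        have h1 := levelSing_level hy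
        subst h1
        rw [levelSing_eq hy, levelSing_eq hy']
      · intro k₂ y hy
        exact absurd (levelSing_level hy) (by omega)
      · intro k₂ x' hx hlt
        exact absurd hlt (by omega)
  | step k₂ x0 y hx0 hrel IH =>
      obtain ⟨Q, h1, hle, huniq, hdown, hup⟩ := IH
      obtain ⟨Q', h1', hle', huniq', hdown', hup', hemb⟩ :=
        path_extend H k₂ x0 y hrel Q h1 hle huniq hup
      refine ⟨Q', h1', hle', huniq', ?_, hup'⟩
      intro k₃ z hz
      rcases hdown' k₃ z hz with hold | ⟨x₃, hx₃, hr⟩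
      · obtain ⟨x₃, hx₃, hr⟩ := hdown k₃ z hold
        exact ⟨x₃, hemb _ _ hx₃, hr⟩
      · exact ⟨x₃, hx₃, hr⟩

/-- Existence of a path family (no assumption). -/
theorem exists_pathFam₁ (H : HandleSequence) : Nonempty (PathFam H) := by
  have h : ∀ i : Fin H.m, ∃ Q : (j : ℕ) → H.C j → Prop,
      (∀ j y, Q j y → j ≤ i.val) ∧ (∀ j y y', Q j y → Q j y' → y = y') ∧
      (∀ (k₂ : Fin H.m) (y : H.C (k₂.val + 1)), Q (k₂.val + 1) y →
        (∃ x', Q k₂.val x' ∧ (H.move k₂).rel x' y) ∨ (∀ x', ¬ (H.move k₂).rel x' y)) ∧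
      (∀ (k₂ : Fin H.m) (x' : H.C k₂.val), Q k₂.val x' → k₂.val < i.val →
        ∃ y, Q (k₂.val + 1) y ∧ (H.move k₂).rel x' y) ∧
      (∀ mv, H.move i = Move.vee mv → Q i.val mv.base) ∧
      (¬ (H.move i).isVee → ∀ j y, ¬ Q j y) := by
    intro i
    cases hmv : H.move i with
    | vee mv =>
        obtain ⟨Q, h1, hle, huniq, hdown, hup⟩ :=
          exists_maxpath H i.val (Nat.le_of_lt i.isLt) mv.base
        refine ⟨Q, hle, huniq, hdown, hup, ?_, ?_⟩
        · intro mv' hmv'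
          injection hmv' with h2
          exact h2 ▸ h1
        · intro hnv
          exact absurd trivial hnv
    | isotopy mI =>
        refine ⟨fun _ _ => False, fun _ _ h => h.elim, fun _ _ _ h => h.elim,
          fun _ _ h => h.elim, fun _ _ h => h.elim, ?_, fun _ _ _ h => h⟩
        intro mv' hmv'
        cases hmv'
    | zero mZ =>
        refine ⟨fun _ _ => False, fun _ _ h => h.elim, fun _ _ _ h => h.elim,
          fun _ _ h => h.elim, fun _ _ h => h.elim, ?_, fun _ _ _ h => h⟩
        intro mv' hmv'
        cases hmv'
    | wedge mW =>
        refine ⟨fun _ _ => False, fun _ _ h => h.elim, fun _ _ _ h => h.elim,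
          fun _ _ h => h.elim, fun _ _ h => h.elim, ?_, fun _ _ _ h => h⟩
        intro mv' hmv'
        cases hmv'
  choose Q h1 h2 h3 h4 h5 h6 using h
  exact ⟨⟨Q, h1, h2, h3, h4, h5, h6⟩⟩

/-- Existence of a path family avoiding all born components, given Property A. -/
theorem exists_pathFam₂ (H : HandleSequence) (hA : PropertyA H) :
    ∃ P : PathFam H,
      ∀ (k : Fin H.m) (mZ : ZeroHandleMove (H.C k.val) (H.C (k.val + 1))),
        H.move k = .zero mZ → ∀ i, ¬ P.Q i (k.val + 1) mZ.born := by
  have h : ∀ i : Fin H.m, ∃ Q : (j : ℕ) → H.C j → Prop,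
      (∀ j y, Q j y → j ≤ i.val) ∧ (∀ j y y', Q j y → Q j y' → y = y') ∧
      (∀ (k₂ : Fin H.m) (y : H.C (k₂.val + 1)), Q (k₂.val + 1) y →
        ∃ x', Q k₂.val x' ∧ (H.move k₂).rel x' y) ∧
      (∀ (k₂ : Fin H.m) (x' : H.C k₂.val), Q k₂.val x' → k₂.val < i.val →
        ∃ y, Q (k₂.val + 1) y ∧ (H.move k₂).rel x' y) ∧
      (∀ mv, H.move i = Move.vee mv → Q i.val mv.base) ∧
      (¬ (H.move i).isVee → ∀ j y, ¬ Q j y) := by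
    intro i
    cases hmv : H.move i with
    | vee mv =>
        obtain ⟨Q, h1, hle, huniq, hdown, hup⟩ :=
          exists_bottompath H i.val mv.base (hA i mv hmv)
        refine ⟨Q, hle, huniq, hdown, hup, ?_, ?_⟩
        · intro mv' hmv'
          injection hmv' with h2
          exact h2 ▸ h1
        · intro hnv
          exact absurd trivial hnv
    | isotopy mI =>
        refine ⟨fun _ _ => False, fun _ _ h => h.elim, fun _ _ _ h => h.elim,
          fun _ _ h => h.elim, fun _ _ h => h.elim, ?_, fun _ _ _ h => h⟩
        intro mv' hmv'
        cases hmv'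
    | zero mZ =>
        refine ⟨fun _ _ => False, fun _ _ h => h.elim, fun _ _ _ h => h.elim,
          fun _ _ h => h.elim, fun _ _ h => h.elim, ?_, fun _ _ _ h => h⟩
        intro mv' hmv'
        cases hmv'
    | wedge mW =>
        refine ⟨fun _ _ => False, fun _ _ h => h.elim, fun _ _ _ h => h.elim,
          fun _ _ h => h.elim, fun _ _ h => h.elim, ?_, fun _ _ _ h => h⟩
        intro mv' hmv'
        cases hmv'
  choose Q h1 h2 h3 h4 h5 h6 using h
  refine ⟨⟨Q, h1, h2, fun i k y hy => Or.inl (h3 i k y hy), h4, h5, h6⟩, ?_⟩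
  intro k mZ hm i hQ
  obtain ⟨x', -, hr⟩ := h3 i k _ hQ
  rw [hm] at hr
  exact (mZ.e x').prop hr
/-- Every handle sequence from a knot to a knot admits a twist function `f` with
`f(Λ₊) = ½`; moreover, if the handle sequence satisfies Property A, then it admits a
regular twist function `f` with `f(Λ₊) = ½`. -/
theorem exists_half_twist_function (H : HandleSequence)
    (Λm : H.C 0) (hΛm : ∀ x : H.C 0, x = Λm)
    (Λp : H.C H.m) (hΛp : ∀ x : H.C H.m, x = Λp) :
    (∃ f : ∀ k, H.C k → ℚ, IsTwistFunction H f ∧ f H.m Λp = 1 / 2) ∧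
      (PropertyA H →
        ∃ f : ∀ k, H.C k → ℚ,
          IsTwistFunction H f ∧ IsRegularTwist H f ∧ f H.m Λp = 1 / 2) := by
  constructor
  · obtain ⟨P⟩ := exists_pathFam₁ H
    exact ⟨P.f Λm, P.isTwist Λm, P.f_top Λm Λp hΛp⟩
  · intro hA
    obtain ⟨P, hb⟩ := exists_pathFam₂ H hA
    exact ⟨P.f Λm, P.isTwist Λm, P.regular Λm hb, P.f_top Λm Λp hΛp⟩
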